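/- (Value of the cell problem for the effective Riemannian metric.) Let μ : ℝ → ℝ be continuous, 1-periodic, with 0 < m ≤ μ(y) for all y. Then the infimum of ∫₀¹ μ(z(s)) z′(s)² ds over all continuously differentiable z : [0,1] → ℝ with z(1) = z(0) + 1 is attained and equals ( ∫₀¹ √(μ(y)) dy )². -/

import Mathlib

open MeasureTheory intervalIntegral

/-- **Value of the cell problem for the effective Riemannian metric.**
For `μ` continuous, 1-periodic and bounded below by `m > 0`, the infimum of
`∫₀¹ μ(z(s)) z′(s)² ds` over all `C¹` curves `z : [0,1] → ℝ` with `z(1) = z(0) + 1` is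
attained and equals `(∫₀¹ √(μ(y)) dy)²`. -/
theorem statement12 (μ : ℝ → ℝ) (hμcont : Continuous μ) (hμper : ∀ y, μ (y + 1) = μ y)
    (m : ℝ) (hm : 0 < m) (hμlb : ∀ y, m ≤ μ y) :
    (∃ z : ℝ → ℝ, ContDiffOn ℝ 1 z (Set.Icc 0 1) ∧ z 1 = z 0 + 1 ∧
      (∫ s in (0:ℝ)..1, μ (z s) * derivWithin z (Set.Icc 0 1) s ^ 2)
        = (∫ y in (0:ℝ)..1, Real.sqrt (μ y)) ^ 2) ∧
    ∀ z : ℝ → ℝ, ContDiffOn ℝ 1 z (Set.Icc 0 1) → z 1 = z 0 + 1 →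
      (∫ y in (0:ℝ)..1, Real.sqrt (μ y)) ^ 2
        ≤ ∫ s in (0:ℝ)..1, μ (z s) * derivWithin z (Set.Icc 0 1) s ^ 2 := by
  have hμpos : ∀ y, 0 < μ y := fun y => lt_of_lt_of_le hm (hμlb y)
  set sq : ℝ → ℝ := fun y => Real.sqrt (μ y) with hsqdef
  have hsqcont : Continuous sq := Real.continuous_sqrt.comp hμcont
  have hsqpos : ∀ y, 0 < sq y := fun y => Real.sqrt_pos.2 (hμpos y)
  have hsqsq : ∀ y, sq y ^ 2 = μ y := fun y => Real.sq_sqrt (hμpos y).le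
  set c : ℝ := ∫ y in (0:ℝ)..1, sq y with hc
  have hsqper : Function.Periodic sq 1 := fun y => by simp only [hsqdef, hμper y]
  have huIcc : Set.uIcc (0:ℝ) 1 = Set.Icc 0 1 := Set.uIcc_of_le zero_le_one
  have hUD : UniqueDiffOn ℝ (Set.Icc (0:ℝ) 1) := uniqueDiffOn_Icc zero_lt_one
  -- key substitution identity
  have key : ∀ z : ℝ → ℝ, ContDiffOn ℝ 1 z (Set.Icc 0 1) → z 1 = z 0 + 1 →
      (∫ s in (0:ℝ)..1, derivWithin z (Set.Icc 0 1) s * sq (z s)) = c := by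
    intro z hz hz1
    set g : ℝ → ℝ := derivWithin z (Set.Icc 0 1) with hg
    have hzc : ContinuousOn z (Set.Icc 0 1) := hz.continuousOn
    have hgc : ContinuousOn g (Set.Icc 0 1) :=
      hz.continuousOn_derivWithin hUD le_rfl
    have hder : ∀ x ∈ Set.Ioo (0:ℝ) 1, HasDerivWithinAt z (g x) (Set.Ioi x) x := by
      intro x hx
      have h1 : DifferentiableWithinAt ℝ z (Set.Icc 0 1) x :=
        hz.differentiableOn one_ne_zero x (Set.Ioo_subset_Icc_self hx)
      have h2 : HasDerivWithinAt z (g x) (Set.Icc 0 1) x := h1.hasDerivWithinAt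
      exact h2.mono_of_mem_nhdsWithin
        (Filter.mem_of_superset (mem_nhdsWithin_of_mem_nhds (Ioo_mem_nhds hx.1 hx.2))
          Set.Ioo_subset_Icc_self)
    have hsub : (∫ s in (0:ℝ)..1, g s • sq (z s)) = ∫ u in (z 0)..(z 1), sq u := by
      have := intervalIntegral.integral_comp_smul_deriv'' (f := z) (f' := g) (g := sq)
        (a := 0) (b := 1) (by rw [huIcc]; exact hzc)
        (by simpa using hder) (by rw [huIcc]; exact hgc)
        (hsqcont.continuousOn)
      simpa [Function.comp] using this
    have hper : (∫ u in (z 0)..(z 1), sq u) = c := by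
      rw [hz1]
      have := hsqper.intervalIntegral_add_eq (z 0) 0
      simpa using this
    simpa [smul_eq_mul] using hsub.trans hper
  constructor
  · -- existence of minimizer
    set F : ℝ → ℝ := fun x => ∫ t in (0:ℝ)..x, sq t with hF
    have hFderiv : ∀ x, HasDerivAt F (sq x) x := fun x =>
      intervalIntegral.integral_hasDerivAt_right (hsqcont.intervalIntegrable _ _)
        hsqcont.stronglyMeasurable.stronglyMeasurableAtFilter hsqcont.continuousAt
    have hFmono : StrictMono F := by
      apply strictMono_of_deriv_pos
      intro x
      rw [(hFderiv x).deriv]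
      exact hsqpos x
    have hFsurj : Function.Surjective F := by
      have hint : ∀ t s : ℝ, IntervalIntegrable sq volume t s := fun t s =>
        hsqcont.intervalIntegrable t s
      exact Continuous.surjective
        (continuous_iff_continuousAt.2 fun x => (hFderiv x).differentiableAt.continuousAt)
        (hsqper.tendsto_atTop_intervalIntegral_of_pos' (hint 0 1) hsqpos zero_lt_one)
        (hsqper.tendsto_atBot_intervalIntegral_of_pos' (hint 0 1) hsqpos zero_lt_one)
    set e : ℝ ≃o ℝ := StrictMono.orderIsoOfSurjective F hFmono hFsurj with he
    have hecoe : ∀ x, e x = F x := fun x => rfl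
    have hFe : ∀ y, F (e.symm y) = y := fun y => by
      rw [← hecoe]; exact e.apply_symm_apply y
    have heF : ∀ x, e.symm (F x) = x := fun x => by
      rw [← hecoe]; exact e.symm_apply_apply x
    have hesymm_cont : Continuous (⇑e.symm) := (OrderIso.continuous e.symm)
    have hinvderiv : ∀ b : ℝ, HasDerivAt (⇑e.symm) (sq (e.symm b))⁻¹ b := fun b =>
      HasDerivAt.of_local_left_inverse hesymm_cont.continuousAt (hFderiv (e.symm b))
        (hsqpos _).ne' (Filter.Eventually.of_forall fun y => hFe y)
    set z : ℝ → ℝ := fun s => e.symm (c * s) with hz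
    have hzderiv : ∀ s, HasDerivAt z ((sq (z s))⁻¹ * c) s := by
      intro s
      have hlin : HasDerivAt (fun x : ℝ => c * x) c s := by
        simpa using (hasDerivAt_id s).const_mul c
      exact (hinvderiv (c * s)).comp s hlin
    have hzdiff : Differentiable ℝ z := fun s => (hzderiv s).differentiableAt
    have hderiv_eq : deriv z = fun s => (sq (z s))⁻¹ * c := funext fun s => (hzderiv s).deriv
    have hzCD : ContDiff ℝ 1 z := by
      rw [contDiff_one_iff_deriv]
      refine ⟨hzdiff, ?_⟩
      rw [hderiv_eq]
      exact ((hsqcont.comp hzdiff.continuous).inv₀ fun s => (hsqpos _).ne').mul continuous_const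
    have hz0 : z 0 = 0 := by
      have h0 : F 0 = 0 := intervalIntegral.integral_same
      have h := heF 0
      rw [h0] at h
      simp [hz, h]
    have hz1 : z 1 = 1 := by
      have h1 : F 1 = c := rfl
      have h := heF 1
      rw [h1] at h
      simp [hz, h]
    refine ⟨z, hzCD.contDiffOn, by rw [hz0, hz1]; ring, ?_⟩
    have heq : Set.EqOn (fun s => μ (z s) * derivWithin z (Set.Icc 0 1) s ^ 2)
        (fun _ => c ^ 2) (Set.uIcc (0:ℝ) 1) := by
      intro s hs
      rw [huIcc] at hs
      have hdw : derivWithin z (Set.Icc 0 1) s = deriv z s :=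
        (hzdiff s).derivWithin (hUD s hs)
      simp only [hdw, hderiv_eq]
      have h1 : μ (z s) = sq (z s) ^ 2 := (hsqsq (z s)).symm
      have h2 : sq (z s) ≠ 0 := (hsqpos _).ne'
      field_simp [h1]
      rw [h1]
    rw [intervalIntegral.integral_congr heq]
    simp
  · -- lower bound
    intro z hz hz1
    set g : ℝ → ℝ := derivWithin z (Set.Icc 0 1) with hg
    have hzc : ContinuousOn z (Set.Icc 0 1) := hz.continuousOn
    have hgc : ContinuousOn g (Set.Icc 0 1) :=
      hz.continuousOn_derivWithin hUD le_rfl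
    have hI : (∫ s in (0:ℝ)..1, g s * sq (z s)) = c := key z hz hz1
    have h1 : IntervalIntegrable (fun s => μ (z s) * g s ^ 2) volume 0 1 := by
      apply ContinuousOn.intervalIntegrable
      rw [huIcc]
      exact (hμcont.comp_continuousOn hzc).mul (hgc.pow 2)
    have h2 : IntervalIntegrable (fun s => g s * sq (z s)) volume 0 1 := by
      apply ContinuousOn.intervalIntegrable
      rw [huIcc]
      exact hgc.mul (hsqcont.comp_continuousOn hzc)
    have hnn : 0 ≤ ∫ s in (0:ℝ)..1, (sq (z s) * g s - c) ^ 2 :=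
      intervalIntegral.integral_nonneg zero_le_one fun s _ => sq_nonneg _
    have hexp : ∀ s, (sq (z s) * g s - c) ^ 2
        = μ (z s) * g s ^ 2 - (2 * c) * (g s * sq (z s)) + c ^ 2 := by
      intro s
      rw [← hsqsq (z s)]
      ring
    have hsplit : (∫ s in (0:ℝ)..1, (sq (z s) * g s - c) ^ 2)
        = (∫ s in (0:ℝ)..1, μ (z s) * g s ^ 2) - (2 * c) * c + c ^ 2 := by
      simp_rw [hexp]
      rw [intervalIntegral.integral_add (h1.sub (h2.const_mul (2 * c)))
          intervalIntegrable_const,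
        intervalIntegral.integral_sub h1 (h2.const_mul (2 * c)),
        intervalIntegral.integral_const_mul, hI]
      simp
    rw [hsplit] at hnn
    nlinarith [hnn]
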